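/- For α, β > 0, the matrices φ = [[α, −α], [−β²/α, (1+β²)/α]] and ψ = [[β, α²/β], [β, (1+α²)/β]] lie in SL(2,ℝ) and satisfy tr(φ⁻¹ψ⁻¹φψ) = −2. -/

import Mathlib

theorem stmt11 (α β : ℝ) (hα : α > 0) (hβ : β > 0) :
    let φ : Matrix (Fin 2) (Fin 2) ℝ := !![α, -α; -β^2/α, (1+β^2)/α]
    let ψ : Matrix (Fin 2) (Fin 2) ℝ := !![β, α^2/β; β, (1+α^2)/β]
    φ.det = 1 ∧ ψ.det = 1 ∧ Matrix.trace (φ⁻¹ * ψ⁻¹ * φ * ψ) = -2 := by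
  intro φ ψ
  have ha := hα.ne'
  have hb := hβ.ne'
  have hφ : φ.det = 1 := by
    simp [φ, Matrix.det_fin_two_of]
    field_simp
    ring
  have hψ : ψ.det = 1 := by
    simp [ψ, Matrix.det_fin_two_of]
    field_simp
    ring
  have hφi : φ⁻¹ = !![(1+β^2)/α, α; β^2/α, α] := by
    apply Matrix.inv_eq_left_inv
    ext i j
    fin_cases i <;> fin_cases j <;>
      simp [φ, Matrix.mul_apply, Fin.sum_univ_two] <;> field_simp <;> ring
  have hψi : ψ⁻¹ = !![(1+α^2)/β, -(α^2/β); -β, β] := by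
    apply Matrix.inv_eq_left_inv
    ext i j
    fin_cases i <;> fin_cases j <;>
      simp [ψ, Matrix.mul_apply, Fin.sum_univ_two] <;> field_simp <;> ring
  refine ⟨hφ, hψ, ?_⟩
  rw [hφi, hψi]
  simp [φ, ψ, Matrix.mul_apply, Fin.sum_univ_two, Matrix.trace_fin_two_of]
  field_simp
  ring
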